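/- (Per-iteration contraction of Signal Space CoSaMP) Suppose x = Dα with ‖α‖₀ ≤ k, y = Ax + e, and A satisfies the D-RIP of order 4k with constant δ_{4k}. Suppose the support estimation scheme S_D satisfies the near-optimality condition with parameters ε₁, ε₂. Then the iterate x^{ℓ+1} of Signal Space CoSaMP satisfies ‖x − x^{ℓ+1}‖ ≤ C₁‖x − x^ℓ‖ + C₂‖e‖, where C₁ = ((2+ε₁)δ_{4k} + ε₁)(2+ε₂)√((1+δ_{4k})/(1−δ_{4k})) and C₂ = (2+ε₂)((2+ε₁)(1+δ_{4k}) + 2)/√(1−δ_{4k}). -/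

import Mathlib

noncomputable section

abbrev Vec (n : ℕ) := EuclideanSpace ℂ (Fin n)

/-- Span of the columns of `D` indexed by `B`. -/
def colSpan {n d : ℕ} (D : Vec d →L[ℂ] Vec n) (B : Finset (Fin d)) : Submodule ℂ (Vec n) :=
  Submodule.span ℂ ((fun j => D (EuclideanSpace.single j 1)) '' (B : Set (Fin d)))

/-- Orthogonal projection onto the span of the columns of `D` indexed by `B`. -/
def P {n d : ℕ} (D : Vec d →L[ℂ] Vec n) (B : Finset (Fin d)) (z : Vec n) : Vec n :=
  (Submodule.orthogonalProjectionOnto (colSpan D B) z : Vec n)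

open Classical in
/-- `α` has at most `k` nonzero entries. -/
def sparse {d : ℕ} (k : ℕ) (α : Vec d) : Prop :=
  (Finset.univ.filter fun i => α i ≠ 0).card ≤ k

/-- `A` satisfies the `D`-RIP of order `k` with constant `δ`. -/
def DRIP {m n d : ℕ} (A : Vec n →L[ℂ] Vec m) (D : Vec d →L[ℂ] Vec n) (k : ℕ) (δ : ℝ) : Prop :=
  ∀ α : Vec d, sparse k α →
    Real.sqrt (1 - δ) * ‖D α‖ ≤ ‖A (D α)‖ ∧ ‖A (D α)‖ ≤ Real.sqrt (1 + δ) * ‖D α‖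


-- decomposition of a vector as sum of singles over a superset of its support
lemma eq_sum_single {d : ℕ} (γ : Vec d) (S : Finset (Fin d)) (hS : ∀ i, i ∉ S → γ i = 0) :
    γ = ∑ j ∈ S, γ j • EuclideanSpace.single j (1:ℂ) := by
  ext i
  rw [WithLp.ofLp_sum, Finset.sum_apply i S (fun j => (γ j • EuclideanSpace.single j (1:ℂ)).ofLp)]
  by_cases hi : i ∈ S
  · rw [Finset.sum_eq_single i]
    · simp [EuclideanSpace.single_apply]
    · intro b _ hbi; simp [EuclideanSpace.single_apply, Ne.symm hbi]
    · exact fun h => absurd hi h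
  · rw [hS i hi, Finset.sum_eq_zero]
    intro b hb
    have : i ≠ b := fun hh => hi (hh ▸ hb)
    simp [EuclideanSpace.single_apply, this]

lemma mem_colSpan_of_support {n d : ℕ} (D : Vec d →L[ℂ] Vec n) (S : Finset (Fin d))
    (γ : Vec d) (hS : ∀ i, i ∉ S → γ i = 0) : D γ ∈ colSpan D S := by
  rw [eq_sum_single γ S hS, map_sum]
  refine Submodule.sum_mem _ fun j hj => ?_
  rw [map_smul]
  exact Submodule.smul_mem _ _ (Submodule.subset_span ⟨j, by simpa using hj, rfl⟩)

lemma mem_colSpan_iff {n d : ℕ} (D : Vec d →L[ℂ] Vec n) (S : Finset (Fin d)) (z : Vec n) :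
    z ∈ colSpan D S ↔ ∃ γ : Vec d, (∀ i, i ∉ S → γ i = 0) ∧ D γ = z := by
  constructor
  · intro hz
    have himg : ((fun j => D (EuclideanSpace.single j 1)) '' (S : Set (Fin d)))
        = ⇑D '' ((fun j => (EuclideanSpace.single j (1:ℂ) : Vec d)) '' (S : Set (Fin d))) := by
      rw [Set.image_image]
    rw [colSpan, himg, ← ContinuousLinearMap.coe_coe, Submodule.span_image] at hz
    obtain ⟨γ, hγ, rfl⟩ := hz
    refine ⟨γ, ?_, rfl⟩
    -- show support of γ ⊆ S
    have : Submodule.span ℂ ((fun j => (EuclideanSpace.single j (1:ℂ) : Vec d)) '' (S : Set (Fin d)))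
        ≤ { carrier := {γ : Vec d | ∀ i, i ∉ S → γ i = 0},
            add_mem' := by intro a b ha hb i hi; have := ha i hi; have := hb i hi
                           show a i + b i = 0; simp_all
            zero_mem' := by intro i hi; rfl
            smul_mem' := by intro c a ha i hi; have := ha i hi
                            show c * a i = 0; simp_all } := by
      rw [Submodule.span_le]
      rintro _ ⟨j, hj, rfl⟩ i hi
      have : i ≠ j := fun hh => hi (hh ▸ hj)
      simp [EuclideanSpace.single_apply, this]
    exact this hγ
  · rintro ⟨γ, hγ, rfl⟩
    exact mem_colSpan_of_support D S γ hγ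

open Classical in
lemma sparse_of_support {d : ℕ} (k : ℕ) (γ : Vec d) (S : Finset (Fin d))
    (hS : ∀ i, i ∉ S → γ i = 0) (hcard : S.card ≤ k) : sparse k γ := by
  unfold sparse
  refine le_trans (Finset.card_le_card ?_) hcard
  intro i hi
  simp only [Finset.mem_filter] at hi
  by_contra hiS
  exact hi.2 (hS i hiS)

lemma colSpan_mono {n d : ℕ} (D : Vec d →L[ℂ] Vec n) {S T : Finset (Fin d)} (hST : S ⊆ T) :
    colSpan D S ≤ colSpan D T :=
  Submodule.span_mono (Set.image_mono (by exact_mod_cast hST))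

section Proj
open scoped InnerProductSpace
variable {n d : ℕ} (D : Vec d →L[ℂ] Vec n) (S : Finset (Fin d))

lemma P_mem (z : Vec n) : P D S z ∈ colSpan D S := (Submodule.orthogonalProjectionOnto (colSpan D S) z).2

lemma inner_sub_P (z w : Vec n) (hw : w ∈ colSpan D S) : ⟪z - P D S z, w⟫_ℂ = 0 :=
  Submodule.starProjection_inner_eq_zero z w hw

lemma inner_P_sub (z w : Vec n) (hw : w ∈ colSpan D S) : ⟪w, z - P D S z⟫_ℂ = 0 := by
  rw [← inner_conj_symm, inner_sub_P D S z w hw, map_zero]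

lemma P_of_mem {z : Vec n} (hz : z ∈ colSpan D S) : P D S z = z :=
  Submodule.starProjection_eq_self_iff.2 hz

lemma P_min (z w : Vec n) (hw : w ∈ colSpan D S) : ‖z - P D S z‖ ≤ ‖z - w‖ := by
  have key : ‖z - w‖ ^ 2 = ‖z - P D S z‖ ^ 2 + ‖P D S z - w‖ ^ 2 := by
    have h1 : z - w = (z - P D S z) + (P D S z - w) := by abel
    rw [h1, norm_add_sq (𝕜 := ℂ)]
    have : ⟪z - P D S z, P D S z - w⟫_ℂ = 0 :=
      inner_sub_P D S z _ (Submodule.sub_mem _ (P_mem D S z) hw)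
    rw [this]
    simp
  nlinarith [norm_nonneg (z - P D S z), norm_nonneg (z - w), norm_nonneg (P D S z - w)]

lemma norm_P_le (z : Vec n) : ‖P D S z‖ ≤ ‖z‖ := by
  have key : ‖z‖ ^ 2 = ‖z - P D S z‖ ^ 2 + ‖P D S z‖ ^ 2 := by
    have h1 : z = (z - P D S z) + P D S z := by abel
    nth_rewrite 1 [h1]
    rw [norm_add_sq (𝕜 := ℂ), inner_sub_P D S z _ (P_mem D S z)]
    simp
  nlinarith [norm_nonneg (P D S z), norm_nonneg z, norm_nonneg (z - P D S z)]

lemma norm_sq_split (z : Vec n) : ‖z‖ ^ 2 = ‖z - P D S z‖ ^ 2 + ‖P D S z‖ ^ 2 := by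
  have h1 : z = (z - P D S z) + P D S z := by abel
  nth_rewrite 1 [h1]
  rw [norm_add_sq (𝕜 := ℂ), inner_sub_P D S z _ (P_mem D S z)]
  simp

lemma inner_P_self (z : Vec n) : ⟪z, P D S z⟫_ℂ = (‖P D S z‖:ℂ) ^ 2 := by
  have : ⟪z - P D S z, P D S z⟫_ℂ = 0 := inner_sub_P D S z _ (P_mem D S z)
  rw [inner_sub_left] at this
  have h2 : ⟪z, P D S z⟫_ℂ = ⟪P D S z, P D S z⟫_ℂ := by linear_combination this
  rw [h2, inner_self_eq_norm_sq_to_K]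
  norm_num

end Proj

section RIP
open scoped InnerProductSpace
variable {m n d k : ℕ} {A : Vec n →L[ℂ] Vec m} {D : Vec d →L[ℂ] Vec n} {δ : ℝ}

lemma rip_of_colSpan (hδ1 : δ < 1) (hRIP : DRIP A D (4*k) δ)
    {S : Finset (Fin d)} (hcard : S.card ≤ 4*k) {z : Vec n} (hz : z ∈ colSpan D S) :
    Real.sqrt (1-δ) * ‖z‖ ≤ ‖A z‖ ∧ ‖A z‖ ≤ Real.sqrt (1+δ) * ‖z‖ := by
  obtain ⟨γ, hγ, rfl⟩ := (mem_colSpan_iff D S z).1 hz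
  exact hRIP γ (sparse_of_support _ γ S hγ hcard)

lemma ripQ (hδ0 : 0 < δ) (hδ1 : δ < 1) (hRIP : DRIP A D (4*k) δ)
    {S : Finset (Fin d)} (hcard : S.card ≤ 4*k) {z : Vec n} (hz : z ∈ colSpan D S) :
    |‖A z‖^2 - ‖z‖^2| ≤ δ * ‖z‖^2 := by
  obtain ⟨hlo, hhi⟩ := rip_of_colSpan hδ1 hRIP hcard hz
  have h1 : (Real.sqrt (1-δ))^2 = 1-δ := Real.sq_sqrt (by linarith)
  have h2 : (Real.sqrt (1+δ))^2 = 1+δ := Real.sq_sqrt (by linarith)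
  have hlo2 : (1-δ) * ‖z‖^2 ≤ ‖A z‖^2 := by
    have := mul_self_le_mul_self (by positivity) hlo
    nlinarith
  have hhi2 : ‖A z‖^2 ≤ (1+δ) * ‖z‖^2 := by
    have := mul_self_le_mul_self (norm_nonneg _) hhi
    nlinarith
  rw [abs_le]; constructor <;> nlinarith

/-- Restricted bilinear estimate: `|Re⟪Au, Aw⟫ - Re⟪u, w⟫| ≤ δ‖u‖‖w‖`. -/
lemma ripRe (hδ0 : 0 < δ) (hδ1 : δ < 1) (hRIP : DRIP A D (4*k) δ)
    {S : Finset (Fin d)} (hcard : S.card ≤ 4*k) {u w : Vec n}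
    (hu : u ∈ colSpan D S) (hw : w ∈ colSpan D S) :
    |RCLike.re ⟪A u, A w⟫_ℂ - RCLike.re ⟪u, w⟫_ℂ| ≤ δ * ‖u‖ * ‖w‖ := by
  -- first the additive bound
  have base : ∀ u w : Vec n, u ∈ colSpan D S → w ∈ colSpan D S →
      |RCLike.re ⟪A u, A w⟫_ℂ - RCLike.re ⟪u, w⟫_ℂ| ≤ δ * (‖u‖^2 + ‖w‖^2) / 2 := by
    intro u w hu hw
    have hsum : u + w ∈ colSpan D S := Submodule.add_mem _ hu hw
    have hdiff : u - w ∈ colSpan D S := Submodule.sub_mem _ hu hw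
    have q1 := ripQ hδ0 hδ1 hRIP hcard hsum
    have q2 := ripQ hδ0 hδ1 hRIP hcard hdiff
    have e1 : ‖A (u+w)‖^2 = ‖A u‖^2 + 2 * RCLike.re ⟪A u, A w⟫_ℂ + ‖A w‖^2 := by
      rw [map_add]; exact norm_add_sq (𝕜 := ℂ) _ _
    have e2 : ‖A (u-w)‖^2 = ‖A u‖^2 - 2 * RCLike.re ⟪A u, A w⟫_ℂ + ‖A w‖^2 := by
      rw [map_sub]; exact norm_sub_sq (𝕜 := ℂ) _ _
    have e3 : ‖u+w‖^2 = ‖u‖^2 + 2 * RCLike.re ⟪u, w⟫_ℂ + ‖w‖^2 := norm_add_sq (𝕜 := ℂ) _ _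
    have e4 : ‖u-w‖^2 = ‖u‖^2 - 2 * RCLike.re ⟪u, w⟫_ℂ + ‖w‖^2 := norm_sub_sq (𝕜 := ℂ) _ _
    rw [abs_le] at q1 q2 ⊢
    constructor <;> nlinarith
  by_cases hu0 : u = 0
  · simp [hu0]
  by_cases hw0 : w = 0
  · simp [hw0]
  have hnu : (0:ℝ) < ‖u‖ := norm_pos_iff.2 hu0
  have hnw : (0:ℝ) < ‖w‖ := norm_pos_iff.2 hw0
  set t : ℝ := Real.sqrt (‖w‖ / ‖u‖) with ht
  have ht0 : 0 < t := Real.sqrt_pos.2 (by positivity)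
  have ht2 : t^2 = ‖w‖ / ‖u‖ := Real.sq_sqrt (by positivity)
  have hu' : ((t:ℂ)) • u ∈ colSpan D S := Submodule.smul_mem _ _ hu
  have hw' : ((t⁻¹:ℝ):ℂ) • w ∈ colSpan D S := Submodule.smul_mem _ _ hw
  have hb := base _ _ hu' hw'
  have hinner1 : ⟪A (((t:ℝ):ℂ) • u), A (((t⁻¹:ℝ):ℂ) • w)⟫_ℂ
      = ((t:ℝ):ℂ) * ((t⁻¹:ℝ):ℂ) * ⟪A u, A w⟫_ℂ := by
    rw [map_smul, map_smul, inner_smul_left, inner_smul_right, Complex.conj_ofReal]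
    ring
  have hinner2 : ⟪(((t:ℝ):ℂ)) • u, (((t⁻¹:ℝ):ℂ)) • w⟫_ℂ
      = ((t:ℝ):ℂ) * ((t⁻¹:ℝ):ℂ) * ⟪u, w⟫_ℂ := by
    rw [inner_smul_left, inner_smul_right]
    rw [Complex.conj_ofReal]
    ring
  have htt : ((t:ℝ):ℂ) * ((t⁻¹:ℝ):ℂ) = 1 := by
    rw [← Complex.ofReal_mul, mul_inv_cancel₀ (ne_of_gt ht0), Complex.ofReal_one]
  rw [hinner1, hinner2, htt, one_mul, one_mul] at hb
  have hnorm1 : ‖(((t:ℝ):ℂ)) • u‖ = t * ‖u‖ := by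
    rw [norm_smul, Complex.norm_real, Real.norm_eq_abs, abs_of_pos ht0]
  have hnorm2 : ‖(((t⁻¹:ℝ):ℂ)) • w‖ = t⁻¹ * ‖w‖ := by
    rw [norm_smul, Complex.norm_real, Real.norm_eq_abs, abs_of_pos (inv_pos.2 ht0)]
  rw [hnorm1, hnorm2] at hb
  have key : (t*‖u‖)^2 + (t⁻¹*‖w‖)^2 = 2 * (‖u‖ * ‖w‖) := by
    have h1 : (t*‖u‖)^2 = (‖w‖/‖u‖) * ‖u‖^2 := by rw [mul_pow, ht2]
    have h2 : (t⁻¹*‖w‖)^2 = (‖u‖/‖w‖) * ‖w‖^2 := by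
      rw [mul_pow, ← Real.sqrt_inv, Real.sq_sqrt (by positivity)]
      field_simp
    rw [h1, h2]
    field_simp
    ring
  rw [key] at hb
  calc |RCLike.re ⟪A u, A w⟫_ℂ - RCLike.re ⟪u, w⟫_ℂ| ≤ δ * (2 * (‖u‖ * ‖w‖)) / 2 := hb
    _ = δ * ‖u‖ * ‖w‖ := by ring

end RIP

section Extra
open scoped InnerProductSpace
variable {n d : ℕ} (D : Vec d →L[ℂ] Vec n)

lemma re_inner_P (S : Finset (Fin d)) (z : Vec n) :
    RCLike.re ⟪P D S z, z⟫_ℂ = ‖P D S z‖^2 := by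
  have h0 : ⟪z - P D S z, P D S z⟫_ℂ = 0 := inner_sub_P D S z _ (P_mem D S z)
  rw [inner_sub_left] at h0
  have h1 : ⟪P D S z, z⟫_ℂ = starRingEnd ℂ ⟪z, P D S z⟫_ℂ := (inner_conj_symm _ _).symm
  have h2 : ⟪z, P D S z⟫_ℂ = ⟪P D S z, P D S z⟫_ℂ := by linear_combination h0
  rw [h1, h2, RCLike.conj_re]
  exact inner_self_eq_norm_sq _

lemma nested_pyth {S Q : Finset (Fin d)} (hSQ : S ⊆ Q) (z : Vec n) :
    ‖P D Q z - P D S z‖^2 = ‖P D Q z‖^2 - ‖P D S z‖^2 := by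
  have h0 : ⟪z - P D Q z, P D S z⟫_ℂ = 0 :=
    inner_sub_P D Q z _ (colSpan_mono D hSQ (P_mem D S z))
  rw [inner_sub_left] at h0
  have h1 : RCLike.re ⟪P D Q z, P D S z⟫_ℂ = ‖P D S z‖^2 := by
    have h2 : ⟪P D Q z, P D S z⟫_ℂ = ⟪z, P D S z⟫_ℂ := by linear_combination -h0
    rw [h2]
    have h3 : ⟪z, P D S z⟫_ℂ = starRingEnd ℂ ⟪P D S z, z⟫_ℂ := (inner_conj_symm _ _).symm
    rw [h3, RCLike.conj_re]
    exact re_inner_P D S z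
  rw [norm_sub_sq (𝕜 := ℂ), h1]
  ring

open Classical in
lemma sparse_support {k : ℕ} {α : Vec d} (hα : sparse k α) :
    ∃ S : Finset (Fin d), S.card ≤ k ∧ ∀ i, i ∉ S → α i = 0 := by
  refine ⟨Finset.univ.filter fun i => α i ≠ 0, hα, fun i hi => ?_⟩
  by_contra hne
  exact hi (Finset.mem_filter.2 ⟨Finset.mem_univ i, hne⟩)

end Extra

lemma le_of_sq_le_mul {X c : ℝ} (hX : 0 ≤ X) (hc : 0 ≤ c) (hsq : X^2 ≤ X * c) : X ≤ c := by
  rcases eq_or_lt_of_le hX with hz | hz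
  · rw [← hz]; exact hc
  · nlinarith

lemma le_of_sq_le_sq' {X c : ℝ} (hX : 0 ≤ X) (hc : 0 ≤ c) (hsq : X^2 ≤ c^2) : X ≤ c := by
  nlinarith

lemma sq_le_sq_of_le {a c : ℝ} (ha : 0 ≤ a) (h : a ≤ c) : a^2 ≤ c^2 := by nlinarith

open scoped InnerProductSpace in
set_option maxHeartbeats 2000000 in
theorem stmt8 {m n d k : ℕ} (A : Vec n →L[ℂ] Vec m) (D : Vec d →L[ℂ] Vec n)
    (δ ε₁ ε₂ : ℝ) (hδ0 : 0 < δ) (hδ1 : δ < 1) (hε₁ : 0 ≤ ε₁) (hε₂ : 0 ≤ ε₂)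
    (hRIP : DRIP A D (4 * k) δ)
    (x : Vec n) (α : Vec d) (hα : sparse k α) (hx : x = D α)
    (e : Vec m) (y : Vec m) (hy : y = A x + e)
    -- current iterate: `xl` is `k`-sparse in `D`, supported on `Γ`
    (xl : Vec n) (Γ : Finset (Fin d)) (hΓcard : Γ.card = k) (hxlΓ : xl ∈ colSpan D Γ)
    (β : Vec d) (hβ : sparse k β) (hxl : xl = D β)
    -- proxy
    (h : Vec n) (hh : h = (ContinuousLinearMap.adjoint A) (y - A xl))
    -- identify: near-optimal support of size 2k for h
    (Ωopt Ω : Finset (Fin d)) (hΩoptCard : Ωopt.card = 2 * k)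
    (hΩopt : ∀ Λ : Finset (Fin d), Λ.card = 2 * k → ‖h - P D Ωopt h‖ ≤ ‖h - P D Λ h‖)
    (hΩcard : Ω.card = 2 * k)
    (hΩnear : ‖P D Ωopt h - P D Ω h‖ ≤
      min (ε₁ * ‖P D Ωopt h‖) (ε₂ * ‖h - P D Ωopt h‖))
    -- merge
    (T : Finset (Fin d)) (hT : T = Ω ∪ Γ)
    -- update: least squares over R(D_T)
    (xt : Vec n) (hxtT : xt ∈ colSpan D T)
    (hxtMin : ∀ z ∈ colSpan D T, ‖y - A xt‖ ≤ ‖y - A z‖)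
    -- prune: near-optimal support of size k for xt
    (Γopt' Γ' : Finset (Fin d)) (hΓoptCard' : Γopt'.card = k)
    (hΓopt' : ∀ Λ : Finset (Fin d), Λ.card = k → ‖xt - P D Γopt' xt‖ ≤ ‖xt - P D Λ xt‖)
    (hΓcard' : Γ'.card = k)
    (hΓnear' : ‖P D Γopt' xt - P D Γ' xt‖ ≤
      min (ε₁ * ‖P D Γopt' xt‖) (ε₂ * ‖xt - P D Γopt' xt‖))
    (xnext : Vec n) (hxnext : xnext = P D Γ' xt) :
    ‖x - xnext‖ ≤
      ((2 + ε₁) * δ + ε₁) * (2 + ε₂) * Real.sqrt ((1 + δ) / (1 - δ)) * ‖x - xl‖ +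
        ((2 + ε₂) * ((2 + ε₁) * (1 + δ) + 2) / Real.sqrt (1 - δ)) * ‖e‖ := by

  classical
  have hd2k : 2 * k ≤ d := by
    have h1 := Finset.card_le_univ Ωopt
    simpa [hΩoptCard] using h1
  have hdk : k ≤ d := by
    have h1 := Finset.card_le_univ Γ
    simpa [hΓcard] using h1
  obtain ⟨Sα, hSαc, hSαs⟩ := sparse_support hα
  obtain ⟨Sβ, hSβc, hSβs⟩ := sparse_support hβ
  obtain ⟨Λ, hΛsub, hΛcard⟩ := Finset.exists_superset_card_eq (s := Sα ∪ Sβ) (n := 2*k)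
    (le_trans (Finset.card_union_le _ _) (by omega)) (by simpa using hd2k)
  obtain ⟨Λk, hΛksub, hΛkcard⟩ := Finset.exists_superset_card_eq (s := Sα) (n := k)
    hSαc (by simpa using hdk)
  set Q : Finset (Fin d) := Λ ∪ Ωopt with hQdef
  have hQc : Q.card ≤ 4 * k :=
    le_trans (Finset.card_union_le _ _) (by omega)
  set TF : Finset (Fin d) := Sα ∪ T with hTFdef
  have hTc : T.card ≤ 3 * k := by
    rw [hT]; exact le_trans (Finset.card_union_le _ _) (by omega)
  have hTFc : TF.card ≤ 4 * k :=
    le_trans (Finset.card_union_le _ _) (by omega)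
  set v : Vec n := x - xl with hv
  set sp : ℝ := Real.sqrt (1 + δ) with hsp
  set sm : ℝ := Real.sqrt (1 - δ) with hsm
  have hsp0 : 0 < sp := Real.sqrt_pos.2 (by linarith)
  have hsm0 : 0 < sm := Real.sqrt_pos.2 (by linarith)
  have hspsq : sp * sp = 1 + δ := Real.mul_self_sqrt (by linarith)
  -- memberships
  have hxSα : x ∈ colSpan D Sα := hx ▸ mem_colSpan_of_support D Sα α hSαs
  have hxlSβ : xl ∈ colSpan D Sβ := hxl ▸ mem_colSpan_of_support D Sβ β hSβs
  have hxΛ : x ∈ colSpan D Λ :=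
    colSpan_mono D (le_trans Finset.subset_union_left hΛsub) hxSα
  have hxlΛ : xl ∈ colSpan D Λ :=
    colSpan_mono D (le_trans Finset.subset_union_right hΛsub) hxlSβ
  have hvΛ : v ∈ colSpan D Λ := Submodule.sub_mem _ hxΛ hxlΛ
  have hΛQ : Λ ⊆ Q := Finset.subset_union_left
  have hOQ : Ωopt ⊆ Q := Finset.subset_union_right
  have hvQ : v ∈ colSpan D Q := colSpan_mono D hΛQ hvΛ
  -- the proxy identity
  have hAve : ∀ z : Vec n, ⟪z, h⟫_ℂ = ⟪A z, A v⟫_ℂ + ⟪A z, e⟫_ℂ := by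
    intro z
    rw [hh, ContinuousLinearMap.adjoint_inner_right, hy,
      show A x + e - A xl = A v + e by rw [hv, map_sub]; abel, inner_add_right]
  set b : ℝ := δ * ‖v‖ + sp * ‖e‖ with hb
  set c : ℝ := (1 + δ) * ‖v‖ + sp * ‖e‖ with hc
  have hb0 : 0 ≤ b := by positivity
  have hc0 : 0 ≤ c := by positivity
  -- master estimate
  have main_est : ∀ z : Vec n, z ∈ colSpan D Q →
      |RCLike.re ⟪z, h⟫_ℂ - RCLike.re ⟪z, v⟫_ℂ| ≤ δ * ‖z‖ * ‖v‖ + sp * ‖z‖ * ‖e‖ := by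
    intro z hz
    have h2 := ripRe hδ0 hδ1 hRIP hQc hz hvQ
    have hAz := (rip_of_colSpan hδ1 hRIP hQc hz).2
    have h3 : |RCLike.re ⟪A z, e⟫_ℂ| ≤ sp * ‖z‖ * ‖e‖ := by
      calc |RCLike.re ⟪A z, e⟫_ℂ| ≤ ‖⟪A z, e⟫_ℂ‖ := RCLike.abs_re_le_norm _
        _ ≤ ‖A z‖ * ‖e‖ := norm_inner_le_norm _ _
        _ ≤ sp * ‖z‖ * ‖e‖ :=
            mul_le_mul_of_nonneg_right hAz (norm_nonneg e)
    have h4 : RCLike.re ⟪z, h⟫_ℂ = RCLike.re ⟪A z, A v⟫_ℂ + RCLike.re ⟪A z, e⟫_ℂ := by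
      rw [hAve z, map_add]
    rw [abs_le] at h2 h3 ⊢
    constructor <;> (rw [h4]; linarith [h2.1, h2.2, h3.1, h3.2])
  -- bound on ‖P_Ωopt h‖
  have hPoptQ : P D Ωopt h ∈ colSpan D Q := colSpan_mono D hOQ (P_mem D Ωopt h)
  have hPopt_c : ‖P D Ωopt h‖ ≤ c := by
    have h1 := main_est _ hPoptQ
    have h2 : RCLike.re ⟪P D Ωopt h, h⟫_ℂ = ‖P D Ωopt h‖ ^ 2 := re_inner_P D Ωopt h
    have h3 : RCLike.re ⟪P D Ωopt h, v⟫_ℂ ≤ ‖P D Ωopt h‖ * ‖v‖ :=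
      le_trans (le_abs_self _)
        (le_trans (RCLike.abs_re_le_norm _) (norm_inner_le_norm _ _))
    rw [abs_le] at h1
    refine le_of_sq_le_mul (norm_nonneg _) hc0 ?_
    rw [hc]
    linarith [h1.2, h2, h3]
  -- the auxiliary vector r
  set r : Vec n := P D Q h - P D Λ h with hr
  have hrQ : r ∈ colSpan D Q :=
    Submodule.sub_mem _ (P_mem D Q h) (colSpan_mono D hΛQ (P_mem D Λ h))
  have hrsplit : r = (h - P D Λ h) - (h - P D Q h) := by rw [hr]; abel
  have hrv : ⟪r, v⟫_ℂ = 0 := by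
    rw [hrsplit, inner_sub_left, inner_sub_P D Λ h v hvΛ, inner_sub_P D Q h v hvQ, sub_zero]
  have hrh : RCLike.re ⟪r, h⟫_ℂ = ‖r‖ ^ 2 := by
    have e1 : ⟪r, h - P D Q h⟫_ℂ = 0 := inner_P_sub D Q h r hrQ
    have e2 : ⟪P D Λ h, r⟫_ℂ = 0 := by
      rw [hrsplit, inner_sub_right, inner_P_sub D Λ h _ (P_mem D Λ h),
        inner_P_sub D Q h _ (colSpan_mono D hΛQ (P_mem D Λ h)), sub_zero]
    have e3 : ⟪r, P D Λ h⟫_ℂ = 0 := by rw [← inner_conj_symm, e2, map_zero]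
    have e4 : ⟪r, h⟫_ℂ = ⟪r, r⟫_ℂ := by
      have hsplit2 : h = (h - P D Q h) + r + P D Λ h := by rw [hr]; abel
      calc ⟪r, h⟫_ℂ = ⟪r, (h - P D Q h) + r + P D Λ h⟫_ℂ := by rw [← hsplit2]
        _ = ⟪r, h - P D Q h⟫_ℂ + ⟪r, r⟫_ℂ + ⟪r, P D Λ h⟫_ℂ := by
            rw [inner_add_right, inner_add_right]
        _ = ⟪r, r⟫_ℂ := by rw [e1, e3]; ring
    rw [e4]; exact inner_self_eq_norm_sq r
  have hr_b : ‖r‖ ≤ b := by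
    have h1 := main_est r hrQ
    have h2 : RCLike.re ⟪r, v⟫_ℂ = 0 := by rw [hrv]; simp
    rw [abs_le] at h1
    refine le_of_sq_le_mul (norm_nonneg _) hb0 ?_
    rw [hb]
    linarith [h1.2, hrh, h2]
  -- Pythagoras + optimality of Ωopt
  have hopt : ‖P D Λ h‖ ≤ ‖P D Ωopt h‖ := by
    have o1 := hΩopt Λ hΛcard
    have s1' := norm_sq_split D Λ h
    have s2' := norm_sq_split D Ωopt h
    refine le_of_sq_le_sq' (norm_nonneg _) (norm_nonneg _) ?_
    have o2 := sq_le_sq_of_le (norm_nonneg _) o1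
    linarith [s1', s2']
  have hPQO : ‖P D Q h - P D Ωopt h‖ ≤ b := by
    have p1 := nested_pyth D hOQ h
    have p2 := nested_pyth D hΛQ h
    refine le_of_sq_le_sq' (norm_nonneg _) hb0 ?_
    have o2 := sq_le_sq_of_le (norm_nonneg _) hr_b
    have o3 := sq_le_sq_of_le (norm_nonneg _) hopt
    have p2' : ‖r‖^2 = ‖P D Q h‖^2 - ‖P D Λ h‖^2 := by rw [hr]; exact p2
    linarith [p1, p2', o2, o3]
  -- the vector q
  set q : Vec n := v - P D Ωopt h with hq
  have hqQ : q ∈ colSpan D Q := Submodule.sub_mem _ hvQ hPoptQ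
  have hq2b : ‖q‖ ≤ 2 * b := by
    have e0 : ⟪q, h - P D Q h⟫_ℂ = 0 := inner_P_sub D Q h q hqQ
    have e1 : ⟪q, q⟫_ℂ = ⟪q, v - h⟫_ℂ + ⟪q, P D Q h - P D Ωopt h⟫_ℂ := by
      have hsplit : (v : Vec n) - P D Ωopt h
          = (v - h) + (h - P D Q h) + (P D Q h - P D Ωopt h) := by abel
      calc ⟪q, q⟫_ℂ = ⟪q, (v - h) + (h - P D Q h) + (P D Q h - P D Ωopt h)⟫_ℂ := by
            rw [hq, ← hsplit]
        _ = ⟪q, v - h⟫_ℂ + ⟪q, h - P D Q h⟫_ℂ + ⟪q, P D Q h - P D Ωopt h⟫_ℂ := by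
            rw [inner_add_right, inner_add_right]
        _ = _ := by rw [e0]; ring
    have e3 : RCLike.re ⟪q, v - h⟫_ℂ ≤ δ * ‖q‖ * ‖v‖ + sp * ‖q‖ * ‖e‖ := by
      have h1 := main_est q hqQ
      rw [abs_le] at h1
      have : RCLike.re ⟪q, v - h⟫_ℂ = RCLike.re ⟪q, v⟫_ℂ - RCLike.re ⟪q, h⟫_ℂ := by
        rw [inner_sub_right, map_sub]
      linarith [h1.1]
    have e4 : RCLike.re ⟪q, P D Q h - P D Ωopt h⟫_ℂ ≤ ‖q‖ * b := by
      calc RCLike.re ⟪q, P D Q h - P D Ωopt h⟫_ℂ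
          ≤ ‖⟪q, P D Q h - P D Ωopt h⟫_ℂ‖ :=
            le_trans (le_abs_self _) (RCLike.abs_re_le_norm _)
        _ ≤ ‖q‖ * ‖P D Q h - P D Ωopt h‖ := norm_inner_le_norm _ _
        _ ≤ ‖q‖ * b := mul_le_mul_of_nonneg_left hPQO (norm_nonneg q)
    have e5 : ‖q‖ ^ 2 = RCLike.re ⟪q, q⟫_ℂ := (inner_self_eq_norm_sq q).symm
    have e6 : RCLike.re ⟪q, q⟫_ℂ
        = RCLike.re ⟪q, v - h⟫_ℂ + RCLike.re ⟪q, P D Q h - P D Ωopt h⟫_ℂ := by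
      rw [e1, map_add]
    refine le_of_sq_le_mul (norm_nonneg _) (by linarith) ?_
    have e4' : RCLike.re ⟪q, P D Q h - P D Ωopt h⟫_ℂ ≤ ‖q‖ * (δ * ‖v‖ + sp * ‖e‖) := by
      rw [← hb]; exact e4
    rw [hb]
    linarith [e3, e4', e5, e6]
  -- identification
  have hident : ‖v - P D Ω v‖ ≤ 2 * b + ε₁ * c := by
    have i1 : ‖v - P D Ω v‖ ≤ ‖v - P D Ω h‖ := P_min D Ω v _ (P_mem D Ω h)
    have i2 : ‖v - P D Ω h‖ ≤ ‖q‖ + ‖P D Ωopt h - P D Ω h‖ := by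
      have hsplit : v - P D Ω h = q + (P D Ωopt h - P D Ω h) := by rw [hq]; abel
      rw [hsplit]; exact norm_add_le _ _
    have i3 : ‖P D Ωopt h - P D Ω h‖ ≤ ε₁ * ‖P D Ωopt h‖ :=
      le_trans hΩnear (min_le_left _ _)
    have i4 : ε₁ * ‖P D Ωopt h‖ ≤ ε₁ * c := mul_le_mul_of_nonneg_left hPopt_c hε₁
    linarith [hq2b]
  -- merge
  have hmerge : ‖x - P D T x‖ ≤ ‖v - P D Ω v‖ := by
    have hw : xl + P D Ω v ∈ colSpan D T :=
      Submodule.add_mem _ (colSpan_mono D (hT ▸ Finset.subset_union_right) hxlΓ)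
        (colSpan_mono D (hT ▸ Finset.subset_union_left) (P_mem D Ω v))
    calc ‖x - P D T x‖ ≤ ‖x - (xl + P D Ω v)‖ := P_min D T x _ hw
      _ = ‖v - P D Ω v‖ := by rw [hv]; congr 1; abel
  -- least squares
  have hxTF : x ∈ colSpan D TF := colSpan_mono D Finset.subset_union_left hxSα
  have hxtTF : xt ∈ colSpan D TF := colSpan_mono D Finset.subset_union_right hxtT
  have hLS : sm * ‖x - xt‖ ≤ sp * ‖x - P D T x‖ + 2 * ‖e‖ := by
    have l1 := (rip_of_colSpan hδ1 hRIP hTFc (Submodule.sub_mem _ hxTF hxtTF)).1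
    have l2 : ‖A (x - xt)‖ ≤ ‖y - A xt‖ + ‖e‖ := by
      have hsplit : A (x - xt) = (y - A xt) - e := by rw [hy, map_sub]; abel
      rw [hsplit]; exact norm_sub_le _ _
    have l3 : ‖y - A xt‖ ≤ ‖y - A (P D T x)‖ := hxtMin _ (P_mem D T x)
    have l4 : ‖y - A (P D T x)‖ ≤ sp * ‖x - P D T x‖ + ‖e‖ := by
      have lmem : x - P D T x ∈ colSpan D TF :=
        Submodule.sub_mem _ hxTF (colSpan_mono D Finset.subset_union_right (P_mem D T x))
      have l5 := (rip_of_colSpan hδ1 hRIP hTFc lmem).2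
      have hsplit : y - A (P D T x) = A (x - P D T x) + e := by rw [hy, map_sub]; abel
      rw [hsplit]; exact le_trans (norm_add_le _ _) (by linarith)
    linarith
  -- prune
  have hxΛk : x ∈ colSpan D Λk := colSpan_mono D hΛksub hxSα
  have hprune : ‖x - xnext‖ ≤ (2 + ε₂) * ‖x - xt‖ := by
    have p1 : ‖x - xnext‖ ≤ ‖x - xt‖ + ‖xt - P D Γopt' xt‖ + ‖P D Γopt' xt - P D Γ' xt‖ := by
      rw [hxnext]
      calc ‖x - P D Γ' xt‖
          = ‖(x - xt) + (xt - P D Γopt' xt) + (P D Γopt' xt - P D Γ' xt)‖ := by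
            congr 1; abel
        _ ≤ _ := norm_add₃_le
    have p2 : ‖P D Γopt' xt - P D Γ' xt‖ ≤ ε₂ * ‖xt - P D Γopt' xt‖ :=
      le_trans hΓnear' (min_le_right _ _)
    have p3 : ‖xt - P D Γopt' xt‖ ≤ ‖x - xt‖ := by
      calc ‖xt - P D Γopt' xt‖ ≤ ‖xt - P D Λk xt‖ := hΓopt' Λk hΛkcard
        _ ≤ ‖xt - x‖ := P_min D Λk xt x hxΛk
        _ = ‖x - xt‖ := norm_sub_rev _ _
    have p4 : ε₂ * ‖xt - P D Γopt' xt‖ ≤ ε₂ * ‖x - xt‖ :=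
      mul_le_mul_of_nonneg_left p3 hε₂
    linarith
  -- final arithmetic
  have hW : ‖x - P D T x‖ ≤ ((2 + ε₁) * δ + ε₁) * ‖v‖ + (2 + ε₁) * sp * ‖e‖ := by
    have harith : 2 * b + ε₁ * c = ((2 + ε₁) * δ + ε₁) * ‖v‖ + (2 + ε₁) * sp * ‖e‖ := by
      rw [hb, hc]; ring
    linarith [hmerge, hident]
  have hfinal1 : ‖x - xt‖ ≤ (sp * ‖x - P D T x‖ + 2 * ‖e‖) / sm := by
    rw [le_div_iff₀ hsm0]
    linarith [hLS, mul_comm (‖x - xt‖) sm]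
  have hsqrt : Real.sqrt ((1 + δ) / (1 - δ)) = sp / sm := by
    rw [hsp, hsm]; exact Real.sqrt_div (by linarith) _
  have key : (2 + ε₂) * ((sp * ‖x - P D T x‖ + 2 * ‖e‖) / sm)
      ≤ ((2 + ε₁) * δ + ε₁) * (2 + ε₂) * (sp / sm) * ‖v‖ +
        ((2 + ε₂) * ((2 + ε₁) * (1 + δ) + 2) / sm) * ‖e‖ := by
    have h2 : (2 + ε₂) * (sp * ‖x - P D T x‖ + 2 * ‖e‖)
        ≤ ((2 + ε₁) * δ + ε₁) * (2 + ε₂) * sp * ‖v‖ +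
          (2 + ε₂) * ((2 + ε₁) * (1 + δ) + 2) * ‖e‖ := by
      have h5 : (2 + ε₂) * sp * ‖x - P D T x‖
          ≤ (2 + ε₂) * sp * (((2 + ε₁) * δ + ε₁) * ‖v‖ + (2 + ε₁) * sp * ‖e‖) :=
        mul_le_mul_of_nonneg_left hW (by positivity)
      have h6 : (2 + ε₂) * sp * (((2 + ε₁) * δ + ε₁) * ‖v‖ + (2 + ε₁) * sp * ‖e‖)
          = ((2 + ε₁) * δ + ε₁) * (2 + ε₂) * sp * ‖v‖ +
            (2 + ε₂) * (2 + ε₁) * (sp * sp) * ‖e‖ := by ring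
      rw [h6, hspsq] at h5
      linarith [h5]
    calc (2 + ε₂) * ((sp * ‖x - P D T x‖ + 2 * ‖e‖) / sm)
        = ((2 + ε₂) * (sp * ‖x - P D T x‖ + 2 * ‖e‖)) / sm := by ring
      _ ≤ (((2 + ε₁) * δ + ε₁) * (2 + ε₂) * sp * ‖v‖ +
            (2 + ε₂) * ((2 + ε₁) * (1 + δ) + 2) * ‖e‖) / sm := by
          gcongr
      _ = _ := by ring
  calc ‖x - xnext‖ ≤ (2 + ε₂) * ‖x - xt‖ := hprune
    _ ≤ (2 + ε₂) * ((sp * ‖x - P D T x‖ + 2 * ‖e‖) / sm) :=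
        mul_le_mul_of_nonneg_left hfinal1 (by linarith)
    _ ≤ ((2 + ε₁) * δ + ε₁) * (2 + ε₂) * (sp / sm) * ‖v‖ +
        ((2 + ε₂) * ((2 + ε₁) * (1 + δ) + 2) / sm) * ‖e‖ := key
    _ = _ := by rw [hsqrt]
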